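/- Suppose that μ-almost everywhere g22 > (1 + g21·p1)·g12 and g11 > (1 + g12·p2)·g21 (the uniformly weak sufficient conditions (UW_C1) and (UW_C2)). Then for every power-split policy (α1, α2), min over j ∈ {1,...,6} of S_j(α,p) ≤ min over j ∈ {1,...,6} of S_j(1,p) = E[C(g11 p1/(1 + g12 p2))] + E[C(g22 p2/(1 + g21 p1))]; i.e. the Han–Kobayashi sum-rate bound is maximized by sending only private messages and having both receivers treat interference as noise. -/
import Mathlib


open MeasureTheory

/-- `C(x) = log₂(1+x)`. -/
noncomputable def C (x : ℝ) : ℝ := Real.logb 2 (1 + x)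

lemma measurable_C : Measurable C := by
  unfold C Real.logb
  exact (Real.measurable_log.comp (measurable_const.add measurable_id)).div_const _

lemma C_nonneg {x : ℝ} (hx : 0 ≤ x) : 0 ≤ C x :=
  Real.logb_nonneg one_lt_two (by linarith)

lemma C_mono {x y : ℝ} (hx : 0 ≤ x) (hxy : x ≤ y) : C x ≤ C y :=
  Real.logb_le_logb_of_le one_lt_two (by linarith) (by linarith)

set_option maxHeartbeats 1000000 in
lemma key (x11 x12 x21 x22 a1 a2 : ℝ)
    (h11 : 0 ≤ x11) (h12 : 0 ≤ x12) (h21 : 0 ≤ x21) (h22 : 0 ≤ x22)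
    (ha10 : 0 ≤ a1) (ha11 : a1 ≤ 1) (ha20 : 0 ≤ a2) (ha21 : a2 ≤ 1)
    (hw1 : (1 + x21) * x12 ≤ x22) (hw2 : (1 + x12) * x21 ≤ x11) :
    C ((a1 * x11 + (1 - a2) * x12) / (1 + a2 * x12))
      + C ((a2 * x22 + (1 - a1) * x21) / (1 + a1 * x21))
    ≤ C (x11 / (1 + x12)) + C (x22 / (1 + x21)) := by
  have hd2 : (0:ℝ) < 1 + a2 * x12 := by have := mul_nonneg ha20 h12; linarith
  have hd1 : (0:ℝ) < 1 + a1 * x21 := by have := mul_nonneg ha10 h21; linarith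
  have he1 : (0:ℝ) < 1 + x12 := by linarith
  have he2 : (0:ℝ) < 1 + x21 := by linarith
  have e1 : 1 + (a1 * x11 + (1 - a2) * x12) / (1 + a2 * x12)
      = (1 + x12 + a1 * x11) / (1 + a2 * x12) := by field_simp; ring
  have e2 : 1 + (a2 * x22 + (1 - a1) * x21) / (1 + a1 * x21)
      = (1 + x21 + a2 * x22) / (1 + a1 * x21) := by field_simp; ring
  have e3 : 1 + x11 / (1 + x12) = (1 + x12 + x11) / (1 + x12) := by field_simp
  have e4 : 1 + x22 / (1 + x21) = (1 + x21 + x22) / (1 + x21) := by field_simp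
  unfold C
  rw [e1, e2, e3, e4]
  have hN1 : (0:ℝ) < 1 + x12 + a1 * x11 := by have := mul_nonneg ha10 h11; linarith
  have hN2 : (0:ℝ) < 1 + x21 + a2 * x22 := by have := mul_nonneg ha20 h22; linarith
  have hM1 : (0:ℝ) < 1 + x12 + x11 := by linarith
  have hM2 : (0:ℝ) < 1 + x21 + x22 := by linarith
  have hL : (0:ℝ) < (1 + x12 + a1 * x11) / (1 + a2 * x12) * ((1 + x21 + a2 * x22) / (1 + a1 * x21)) :=
    mul_pos (div_pos hN1 hd2) (div_pos hN2 hd1)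
  have hR : (0:ℝ) < (1 + x12 + x11) / (1 + x12) * ((1 + x21 + x22) / (1 + x21)) :=
    mul_pos (div_pos hM1 he1) (div_pos hM2 he2)
  rw [← Real.logb_mul (ne_of_gt (div_pos hN1 hd2)) (ne_of_gt (div_pos hN2 hd1)),
      ← Real.logb_mul (ne_of_gt (div_pos hM1 he1)) (ne_of_gt (div_pos hM2 he2))]
  apply Real.logb_le_logb_of_le one_lt_two hL
  rw [div_mul_div_comm, div_mul_div_comm, div_le_div_iff₀ (by positivity) (by positivity)]
  have iA : (1 + x12 + a1 * x11) * (1 + x21) ≤ (1 + x12 + x11) * (1 + a1 * x21) := by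
    nlinarith [mul_nonneg (sub_nonneg.2 ha11) (sub_nonneg.2 hw2)]
  have iB : (1 + x21 + a2 * x22) * (1 + x12) ≤ (1 + x21 + x22) * (1 + a2 * x12) := by
    nlinarith [mul_nonneg (sub_nonneg.2 ha21) (sub_nonneg.2 hw1)]
  have := mul_le_mul iA iB (by positivity) (by positivity)
  nlinarith [this]

variable {Ω : Type*} [MeasurableSpace Ω]

/-- Han–Kobayashi sum-rate bound `S1(α,p)` (sum of the two individual-rate bounds). -/
noncomputable def S1 (μ : Measure Ω) (g11 g12 g21 g22 p1 p2 a1 a2 : Ω → ℝ) : ℝ :=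
  (∫ ω, C (g11 ω * p1 ω / (1 + a2 ω * g12 ω * p2 ω)) ∂μ)
    + ∫ ω, C (g22 ω * p2 ω / (1 + a1 ω * g21 ω * p1 ω)) ∂μ

/-- Han–Kobayashi sum-rate bound `S2(α,p)`. -/
noncomputable def S2 (μ : Measure Ω) (g11 g12 g21 g22 p1 p2 a1 a2 : Ω → ℝ) : ℝ :=
  (∫ ω, C ((g11 ω * p1 ω + (1 - a2 ω) * g12 ω * p2 ω) / (1 + a2 ω * g12 ω * p2 ω)) ∂μ)
    + ∫ ω, C (a2 ω * g22 ω * p2 ω / (1 + a1 ω * g21 ω * p1 ω)) ∂μ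

/-- Han–Kobayashi sum-rate bound `S3(α,p)`: `S2` with the roles of the two users swapped. -/
noncomputable def S3 (μ : Measure Ω) (g11 g12 g21 g22 p1 p2 a1 a2 : Ω → ℝ) : ℝ :=
  S2 μ g22 g21 g12 g11 p2 p1 a2 a1

/-- Han–Kobayashi sum-rate bound `S4(α,p)`. -/
noncomputable def S4 (μ : Measure Ω) (g11 g12 g21 g22 p1 p2 a1 a2 : Ω → ℝ) : ℝ :=
  (∫ ω, C ((a1 ω * g11 ω * p1 ω + (1 - a2 ω) * g12 ω * p2 ω) / (1 + a2 ω * g12 ω * p2 ω)) ∂μ)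
    + ∫ ω, C ((a2 ω * g22 ω * p2 ω + (1 - a1 ω) * g21 ω * p1 ω) / (1 + a1 ω * g21 ω * p1 ω)) ∂μ

/-- Han–Kobayashi sum-rate bound `S5(α,p)` (the `2R1 + R2` bound combined with `R2`). -/
noncomputable def S5 (μ : Measure Ω) (g11 g12 g21 g22 p1 p2 a1 a2 : Ω → ℝ) : ℝ :=
  ((∫ ω, C ((g11 ω * p1 ω + (1 - a2 ω) * g12 ω * p2 ω) / (1 + a2 ω * g12 ω * p2 ω)) ∂μ)
    + (∫ ω, C (a1 ω * g11 ω * p1 ω / (1 + a2 ω * g12 ω * p2 ω)) ∂μ)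
    + (∫ ω, C ((a2 ω * g22 ω * p2 ω + (1 - a1 ω) * g21 ω * p1 ω) / (1 + a1 ω * g21 ω * p1 ω)) ∂μ)
    + ∫ ω, C (g22 ω * p2 ω / (1 + a1 ω * g21 ω * p1 ω)) ∂μ) / 2

/-- Han–Kobayashi sum-rate bound `S6(α,p)`: `S5` with the roles of the two users swapped. -/
noncomputable def S6 (μ : Measure Ω) (g11 g12 g21 g22 p1 p2 a1 a2 : Ω → ℝ) : ℝ :=
  S5 μ g22 g21 g12 g11 p2 p1 a2 a1

/-- The Han–Kobayashi sum-rate bound: `min` over `j ∈ {1,…,6}` of `S_j(α,p)`. -/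
noncomputable def minS (μ : Measure Ω) (g11 g12 g21 g22 p1 p2 a1 a2 : Ω → ℝ) : ℝ :=
  min (S1 μ g11 g12 g21 g22 p1 p2 a1 a2)
    (min (S2 μ g11 g12 g21 g22 p1 p2 a1 a2)
      (min (S3 μ g11 g12 g21 g22 p1 p2 a1 a2)
        (min (S4 μ g11 g12 g21 g22 p1 p2 a1 a2)
          (min (S5 μ g11 g12 g21 g22 p1 p2 a1 a2) (S6 μ g11 g12 g21 g22 p1 p2 a1 a2)))))

/-- Under the uniformly weak sufficient conditions (UW_C1) and (UW_C2) holding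
a.e., for every power-split policy `(α1, α2)`,
`min_{j∈{1,…,6}} S_j(α,p) ≤ min_{j∈{1,…,6}} S_j(1,p)
  = E[C(g11 p1/(1 + g12 p2))] + E[C(g22 p2/(1 + g21 p1))]`:
the Han–Kobayashi sum-rate bound is maximized by sending only private messages and having both
receivers treat interference as noise. -/
theorem stmt11 (μ : Measure Ω) [IsProbabilityMeasure μ]
    (g11 g12 g21 g22 p1 p2 : Ω → ℝ)
    (hg11 : Measurable g11) (hg12 : Measurable g12)
    (hg21 : Measurable g21) (hg22 : Measurable g22)
    (hp1 : Measurable p1) (hp2 : Measurable p2)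
    (hg11n : ∀ ω, 0 ≤ g11 ω) (hg12n : ∀ ω, 0 ≤ g12 ω)
    (hg21n : ∀ ω, 0 ≤ g21 ω) (hg22n : ∀ ω, 0 ≤ g22 ω)
    (hp1n : ∀ ω, 0 ≤ p1 ω) (hp2n : ∀ ω, 0 ≤ p2 ω)
    (hUW1 : ∀ᵐ ω ∂μ, (1 + g21 ω * p1 ω) * g12 ω < g22 ω)
    (hUW2 : ∀ᵐ ω ∂μ, (1 + g12 ω * p2 ω) * g21 ω < g11 ω)
    (hI1 : Integrable (fun ω => C (g11 ω * p1 ω + g12 ω * p2 ω)) μ)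
    (hI2 : Integrable (fun ω => C (g21 ω * p1 ω + g22 ω * p2 ω)) μ)
    (a1 a2 : Ω → ℝ) (ha1 : Measurable a1) (ha2 : Measurable a2)
    (ha1r : ∀ ω, a1 ω ∈ Set.Icc (0 : ℝ) 1) (ha2r : ∀ ω, a2 ω ∈ Set.Icc (0 : ℝ) 1) :
    minS μ g11 g12 g21 g22 p1 p2 a1 a2 ≤ minS μ g11 g12 g21 g22 p1 p2 1 1
    ∧ minS μ g11 g12 g21 g22 p1 p2 1 1
        = (∫ ω, C (g11 ω * p1 ω / (1 + g12 ω * p2 ω)) ∂μ)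
          + ∫ ω, C (g22 ω * p2 ω / (1 + g21 ω * p1 ω)) ∂μ := by
  set A : ℝ := ∫ ω, C (g11 ω * p1 ω / (1 + g12 ω * p2 ω)) ∂μ with hA
  set B : ℝ := ∫ ω, C (g22 ω * p2 ω / (1 + g21 ω * p1 ω)) ∂μ with hB
  have hmin1 : minS μ g11 g12 g21 g22 p1 p2 1 1 = A + B := by
    have h1 : S1 μ g11 g12 g21 g22 p1 p2 1 1 = A + B := by simp [S1, hA, hB]
    have h2 : S2 μ g11 g12 g21 g22 p1 p2 1 1 = A + B := by simp [S2, hA, hB]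
    have h3 : S3 μ g11 g12 g21 g22 p1 p2 1 1 = A + B := by
      simp [S3, S2, hA, hB]; ring
    have h4 : S4 μ g11 g12 g21 g22 p1 p2 1 1 = A + B := by simp [S4, hA, hB]
    have h5 : S5 μ g11 g12 g21 g22 p1 p2 1 1 = A + B := by simp [S5, hA, hB]; ring
    have h6 : S6 μ g11 g12 g21 g22 p1 p2 1 1 = A + B := by simp [S6, S5, hA, hB]; ring
    rw [minS, h1, h2, h3, h4, h5, h6]; simp
  refine ⟨?_, hmin1⟩
  rw [hmin1]
  -- it suffices that S4(α) ≤ A + B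
  have hstep : minS μ g11 g12 g21 g22 p1 p2 a1 a2 ≤ S4 μ g11 g12 g21 g22 p1 p2 a1 a2 := by
    rw [minS]
    exact le_trans (min_le_right _ _) (le_trans (min_le_right _ _)
      (le_trans (min_le_right _ _) (min_le_left _ _)))
  refine hstep.trans ?_
  -- integrability helper
  have hIC : ∀ (f M : Ω → ℝ), Measurable f → (∀ ω, 0 ≤ f ω) → (∀ ω, f ω ≤ M ω) →
      Integrable (fun ω => C (M ω)) μ → Integrable (fun ω => C (f ω)) μ := by
    intro f M hf h0 hle hM
    refine hM.mono' (measurable_C.comp hf).aestronglyMeasurable (Filter.Eventually.of_forall fun ω => ?_)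
    rw [Real.norm_eq_abs, abs_of_nonneg (C_nonneg (h0 ω))]
    exact C_mono (h0 ω) (hle ω)
  have hx11 : ∀ ω, 0 ≤ g11 ω * p1 ω := fun ω => mul_nonneg (hg11n ω) (hp1n ω)
  have hx12 : ∀ ω, 0 ≤ g12 ω * p2 ω := fun ω => mul_nonneg (hg12n ω) (hp2n ω)
  have hx21 : ∀ ω, 0 ≤ g21 ω * p1 ω := fun ω => mul_nonneg (hg21n ω) (hp1n ω)
  have hx22 : ∀ ω, 0 ≤ g22 ω * p2 ω := fun ω => mul_nonneg (hg22n ω) (hp2n ω)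
  -- the four integrands
  set f4a : Ω → ℝ := fun ω =>
    (a1 ω * g11 ω * p1 ω + (1 - a2 ω) * g12 ω * p2 ω) / (1 + a2 ω * g12 ω * p2 ω) with hf4a
  set f4b : Ω → ℝ := fun ω =>
    (a2 ω * g22 ω * p2 ω + (1 - a1 ω) * g21 ω * p1 ω) / (1 + a1 ω * g21 ω * p1 ω) with hf4b
  have hf4am : Measurable f4a := by
    apply Measurable.div
    · exact ((ha1.mul hg11).mul hp1).add (((measurable_const.sub ha2).mul hg12).mul hp2)
    · exact measurable_const.add ((ha2.mul hg12).mul hp2)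
  have hf4bm : Measurable f4b := by
    apply Measurable.div
    · exact ((ha2.mul hg22).mul hp2).add (((measurable_const.sub ha1).mul hg21).mul hp1)
    · exact measurable_const.add ((ha1.mul hg21).mul hp1)
  have hf4a0 : ∀ ω, 0 ≤ f4a ω := by
    intro ω
    have h1 := (ha1r ω).1; have h2 := (ha2r ω).2; have h1' := (ha2r ω).1
    apply div_nonneg
    · have := mul_nonneg (mul_nonneg h1 (hg11n ω)) (hp1n ω)
      have := mul_nonneg (mul_nonneg (by linarith : (0:ℝ) ≤ 1 - a2 ω) (hg12n ω)) (hp2n ω)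
      linarith
    · have := mul_nonneg (mul_nonneg h1' (hg12n ω)) (hp2n ω); linarith
  have hf4b0 : ∀ ω, 0 ≤ f4b ω := by
    intro ω
    have h1 := (ha1r ω).1; have h1' := (ha1r ω).2; have h2 := (ha2r ω).1
    apply div_nonneg
    · have := mul_nonneg (mul_nonneg h2 (hg22n ω)) (hp2n ω)
      have := mul_nonneg (mul_nonneg (by linarith : (0:ℝ) ≤ 1 - a1 ω) (hg21n ω)) (hp1n ω)
      linarith
    · have := mul_nonneg (mul_nonneg h1 (hg21n ω)) (hp1n ω); linarith
  have hf4ale : ∀ ω, f4a ω ≤ g11 ω * p1 ω + g12 ω * p2 ω := by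
    intro ω
    have h1' := (ha1r ω).2
    have h2 := (ha2r ω).1; have h2' := (ha2r ω).2
    have hden : (1:ℝ) ≤ 1 + a2 ω * g12 ω * p2 ω := by
      have := mul_nonneg (mul_nonneg h2 (hg12n ω)) (hp2n ω); linarith
    have hnum : (0:ℝ) ≤ a1 ω * g11 ω * p1 ω + (1 - a2 ω) * g12 ω * p2 ω := by
      have := mul_nonneg (mul_nonneg (ha1r ω).1 (hg11n ω)) (hp1n ω)
      have := mul_nonneg (mul_nonneg (by linarith : (0:ℝ) ≤ 1 - a2 ω) (hg12n ω)) (hp2n ω)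
      linarith
    have hle := div_le_self hnum hden
    have e1 : a1 ω * g11 ω * p1 ω ≤ g11 ω * p1 ω := by nlinarith [hx11 ω]
    have e2 : (1 - a2 ω) * g12 ω * p2 ω ≤ g12 ω * p2 ω := by nlinarith [hx12 ω]
    calc f4a ω ≤ _ := hle
      _ ≤ g11 ω * p1 ω + g12 ω * p2 ω := by linarith
  have hf4ble : ∀ ω, f4b ω ≤ g21 ω * p1 ω + g22 ω * p2 ω := by
    intro ω
    have h2' := (ha2r ω).2
    have h1 := (ha1r ω).1; have h1' := (ha1r ω).2
    have hden : (1:ℝ) ≤ 1 + a1 ω * g21 ω * p1 ω := by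
      have := mul_nonneg (mul_nonneg h1 (hg21n ω)) (hp1n ω); linarith
    have hnum : (0:ℝ) ≤ a2 ω * g22 ω * p2 ω + (1 - a1 ω) * g21 ω * p1 ω := by
      have := mul_nonneg (mul_nonneg (ha2r ω).1 (hg22n ω)) (hp2n ω)
      have := mul_nonneg (mul_nonneg (by linarith : (0:ℝ) ≤ 1 - a1 ω) (hg21n ω)) (hp1n ω)
      linarith
    have hle := div_le_self hnum hden
    have e1 : a2 ω * g22 ω * p2 ω ≤ g22 ω * p2 ω := by nlinarith [hx22 ω]
    have e2 : (1 - a1 ω) * g21 ω * p1 ω ≤ g21 ω * p1 ω := by nlinarith [hx21 ω]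
    calc f4b ω ≤ _ := hle
      _ ≤ g21 ω * p1 ω + g22 ω * p2 ω := by linarith
  -- F1, F2
  set F1 : Ω → ℝ := fun ω => g11 ω * p1 ω / (1 + g12 ω * p2 ω) with hF1
  set F2 : Ω → ℝ := fun ω => g22 ω * p2 ω / (1 + g21 ω * p1 ω) with hF2
  have hF1m : Measurable F1 :=
    (hg11.mul hp1).div (measurable_const.add (hg12.mul hp2))
  have hF2m : Measurable F2 :=
    (hg22.mul hp2).div (measurable_const.add (hg21.mul hp1))
  have hF10 : ∀ ω, 0 ≤ F1 ω := fun ω => div_nonneg (hx11 ω) (by have := hx12 ω; linarith)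
  have hF20 : ∀ ω, 0 ≤ F2 ω := fun ω => div_nonneg (hx22 ω) (by have := hx21 ω; linarith)
  have hF1le : ∀ ω, F1 ω ≤ g11 ω * p1 ω + g12 ω * p2 ω := by
    intro ω
    have := div_le_self (hx11 ω) (by have := hx12 ω; linarith : (1:ℝ) ≤ 1 + g12 ω * p2 ω)
    have := hx12 ω; simp only [hF1]; linarith
  have hF2le : ∀ ω, F2 ω ≤ g21 ω * p1 ω + g22 ω * p2 ω := by
    intro ω
    have := div_le_self (hx22 ω) (by have := hx21 ω; linarith : (1:ℝ) ≤ 1 + g21 ω * p1 ω)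
    have := hx21 ω; simp only [hF2]; linarith
  have hIf4a : Integrable (fun ω => C (f4a ω)) μ := hIC f4a _ hf4am hf4a0 hf4ale hI1
  have hIf4b : Integrable (fun ω => C (f4b ω)) μ := hIC f4b _ hf4bm hf4b0 hf4ble hI2
  have hIF1 : Integrable (fun ω => C (F1 ω)) μ := hIC F1 _ hF1m hF10 hF1le hI1
  have hIF2 : Integrable (fun ω => C (F2 ω)) μ := hIC F2 _ hF2m hF20 hF2le hI2
  have hS4 : S4 μ g11 g12 g21 g22 p1 p2 a1 a2
      = (∫ ω, C (f4a ω) ∂μ) + ∫ ω, C (f4b ω) ∂μ := rfl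
  have hABi : A + B = (∫ ω, C (F1 ω) ∂μ) + ∫ ω, C (F2 ω) ∂μ := rfl
  rw [hS4, hABi, ← integral_add hIf4a hIf4b, ← integral_add hIF1 hIF2]
  apply integral_mono_ae (hIf4a.add hIf4b) (hIF1.add hIF2)
  filter_upwards [hUW1, hUW2] with ω h1 h2
  have hw1 : (1 + g21 ω * p1 ω) * (g12 ω * p2 ω) ≤ g22 ω * p2 ω := by
    nlinarith [mul_le_mul_of_nonneg_right h1.le (hp2n ω)]
  have hw2 : (1 + g12 ω * p2 ω) * (g21 ω * p1 ω) ≤ g11 ω * p1 ω := by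
    nlinarith [mul_le_mul_of_nonneg_right h2.le (hp1n ω)]
  have hk := key (g11 ω * p1 ω) (g12 ω * p2 ω) (g21 ω * p1 ω) (g22 ω * p2 ω)
    (a1 ω) (a2 ω) (hx11 ω) (hx12 ω) (hx21 ω) (hx22 ω)
    (ha1r ω).1 (ha1r ω).2 (ha2r ω).1 (ha2r ω).2 hw1 hw2
  simp only [Pi.add_apply, hf4a, hf4b, hF1, hF2]
  have e1 : a1 ω * (g11 ω * p1 ω) = a1 ω * g11 ω * p1 ω := by ring
  have e2 : (1 - a2 ω) * (g12 ω * p2 ω) = (1 - a2 ω) * g12 ω * p2 ω := by ring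
  have e3 : a2 ω * (g12 ω * p2 ω) = a2 ω * g12 ω * p2 ω := by ring
  have e4 : a2 ω * (g22 ω * p2 ω) = a2 ω * g22 ω * p2 ω := by ring
  have e5 : (1 - a1 ω) * (g21 ω * p1 ω) = (1 - a1 ω) * g21 ω * p1 ω := by ring
  have e6 : a1 ω * (g21 ω * p1 ω) = a1 ω * g21 ω * p1 ω := by ring
  rw [e1, e2, e3, e4, e5, e6] at hk
  exact hk
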